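/- For 0 ≤ r ≤ 2 and t > 0, the risk of hard thresholding at the origin satisfies ρ_H(t, 0) = 2∫_t^∞ z^r φ(z) dz = 2 t^r Φ̄(t)(1 + θ t^{-2}) for some θ ∈ [0, r]. In particular 2 t^r Φ̄(t) ≤ 2∫_t^∞ z^r φ(z) dz ≤ 2 t^r Φ̄(t)(1 + r t^{-2}). -/

import Mathlib

open MeasureTheory Set

/-- Standard Gaussian density. -/
noncomputable def gphi (v : ℝ) : ℝ := (Real.sqrt (2 * Real.pi))⁻¹ * Real.exp (-v ^ 2 / 2)

/-- Standard Gaussian upper tail probability. -/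
noncomputable def PhiBar (v : ℝ) : ℝ := ∫ x in Set.Ioi v, gphi x

/-- Standard Gaussian CDF. -/
noncomputable def Phi (v : ℝ) : ℝ := ∫ x in Set.Iic v, gphi x

lemma gphi_pos (v : ℝ) : 0 < gphi v := by
  have h : 0 < Real.sqrt (2 * Real.pi) := Real.sqrt_pos.mpr (by positivity)
  exact mul_pos (inv_pos.mpr h) (Real.exp_pos _)

lemma gphi_eq (v : ℝ) :
    gphi v = (Real.sqrt (2 * Real.pi))⁻¹ * Real.exp (-(1/2) * v ^ 2) := by
  unfold gphi; ring_nf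

lemma continuous_gphi : Continuous gphi := by
  unfold gphi
  exact continuous_const.mul (Real.continuous_exp.comp (by continuity))

lemma integrable_gphi : Integrable gphi := by
  have h : Integrable fun v : ℝ => Real.exp (-(1/2) * v ^ 2) :=
    integrable_exp_neg_mul_sq (by norm_num)
  exact (h.const_mul ((Real.sqrt (2 * Real.pi))⁻¹)).congr
    (Filter.Eventually.of_forall fun v => (gphi_eq v).symm)

lemma integrable_rpow_gphi {r : ℝ} (hr : 0 ≤ r) :
    Integrable fun z : ℝ => z ^ r * gphi z := by
  have h : Integrable fun z : ℝ => z ^ r * Real.exp (-(1/2) * z ^ 2) :=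
    integrable_rpow_mul_exp_neg_mul_sq (by norm_num) (by linarith)
  exact (h.const_mul ((Real.sqrt (2 * Real.pi))⁻¹)).congr
    (Filter.Eventually.of_forall fun z => by simp only [gphi_eq]; ring)

lemma integrable_sq_gphi : Integrable fun z : ℝ => z ^ 2 * gphi z := by
  have h := integrable_rpow_gphi (r := (2 : ℝ)) (by norm_num)
  exact h.congr (Filter.Eventually.of_forall fun z => by simp [Real.rpow_two])

lemma hasDerivAt_gphi (v : ℝ) : HasDerivAt gphi (-(v * gphi v)) v := by
  have h1 : HasDerivAt (fun v : ℝ => -v ^ 2 / 2) (-v) v := by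
    have := (hasDerivAt_pow 2 v).neg.div_const 2
    refine this.congr_deriv ?_
    push_cast
    ring
  have h2 := h1.exp
  have h3 := h2.const_mul ((Real.sqrt (2 * Real.pi))⁻¹)
  refine h3.congr_deriv ?_
  unfold gphi; ring

lemma tendsto_mul_gphi : Filter.Tendsto (fun z : ℝ => z * gphi z) Filter.atTop (nhds 0) := by
  have h := tendsto_rpow_abs_mul_exp_neg_mul_sq_cocompact (a := 1/2) (by norm_num) 1
  rw [cocompact_eq_atBot_atTop] at h
  have h' := (h.mono_left le_sup_right).const_mul ((Real.sqrt (2 * Real.pi))⁻¹)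
  rw [mul_zero] at h'
  apply h'.congr'
  filter_upwards [Filter.eventually_ge_atTop (0 : ℝ)] with z hz
  rw [abs_of_nonneg hz, Real.rpow_one, gphi_eq]
  ring

lemma tendsto_neg_mul_gphi :
    Filter.Tendsto (fun z : ℝ => -(z * gphi z)) Filter.atTop (nhds 0) := by
  simpa using tendsto_mul_gphi.neg

/-- FTC identity: `∫_t^∞ (z²-1) φ(z) dz = t φ(t)`. -/
lemma integral_sq_sub_one_gphi (t : ℝ) :
    ∫ z in Set.Ioi t, (z ^ 2 - 1) * gphi z = t * gphi t := by
  have hderiv : ∀ z ∈ Set.Ici t,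
      HasDerivAt (fun z : ℝ => -(z * gphi z)) ((z ^ 2 - 1) * gphi z) z := by
    intro z _
    have := ((hasDerivAt_id' z).mul (hasDerivAt_gphi z)).neg
    refine this.congr_deriv ?_
    ring
  have hint : IntegrableOn (fun z : ℝ => (z ^ 2 - 1) * gphi z) (Set.Ioi t) := by
    have h := integrable_sq_gphi.sub integrable_gphi
    exact ((h.congr (Filter.Eventually.of_forall fun z => by
      simp only [Pi.sub_apply]; ring)).restrict)
  have := integral_Ioi_of_hasDerivAt_of_tendsto' hderiv hint tendsto_neg_mul_gphi
  rw [this]; ring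

/-- FTC identity for the Mills-ratio bound. -/
lemma integral_mills_core (t : ℝ) :
    ∫ z in Set.Ioi t, gphi z * ((z ^ 4 + 2 * z ^ 2 - 1) / (1 + z ^ 2) ^ 2)
      = t * gphi t * (1 + t ^ 2)⁻¹ := by
  have hderiv : ∀ z ∈ Set.Ici t,
      HasDerivAt (fun z : ℝ => -(z * gphi z * (1 + z ^ 2)⁻¹))
        (gphi z * ((z ^ 4 + 2 * z ^ 2 - 1) / (1 + z ^ 2) ^ 2)) z := by
    intro z _
    have hz : (1 : ℝ) + z ^ 2 ≠ 0 := by positivity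
    have hu : HasDerivAt (fun z : ℝ => z * gphi z)
        (1 * gphi z + z * -(z * gphi z)) z :=
      (hasDerivAt_id' z).mul (hasDerivAt_gphi z)
    have hv : HasDerivAt (fun z : ℝ => 1 + z ^ 2) (2 * z) z := by
      simpa using (hasDerivAt_pow 2 z).const_add 1
    have hvi : HasDerivAt (fun z : ℝ => (1 + z ^ 2)⁻¹)
        (-(2 * z) / (1 + z ^ 2) ^ 2) z := hv.inv hz
    have := (hu.mul hvi).neg
    refine this.congr_deriv ?_
    field_simp
    ring
  have hint : IntegrableOn
      (fun z : ℝ => gphi z * ((z ^ 4 + 2 * z ^ 2 - 1) / (1 + z ^ 2) ^ 2)) (Set.Ioi t) := by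
    apply Integrable.mono integrable_gphi.restrict
    · apply Continuous.aestronglyMeasurable
      exact continuous_gphi.mul ((by continuity : Continuous fun z : ℝ =>
        z ^ 4 + 2 * z ^ 2 - 1).div (by continuity) fun z => by positivity)
    · refine Filter.Eventually.of_forall fun z => ?_
      have hg := gphi_pos z
      have hq : |(z ^ 4 + 2 * z ^ 2 - 1) / (1 + z ^ 2) ^ 2| ≤ 1 := by
        rw [abs_div, abs_of_nonneg (by positivity : (0:ℝ) ≤ (1 + z ^ 2) ^ 2),
          div_le_one (by positivity)]
        exact abs_le.mpr ⟨by nlinarith [sq_nonneg z], by nlinarith [sq_nonneg z]⟩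
      rw [Real.norm_eq_abs, Real.norm_eq_abs, abs_mul, abs_of_nonneg hg.le]
      calc gphi z * |(z ^ 4 + 2 * z ^ 2 - 1) / (1 + z ^ 2) ^ 2| ≤ gphi z * 1 :=
            mul_le_mul_of_nonneg_left hq hg.le
        _ = gphi z := mul_one _
  have htend : Filter.Tendsto (fun z : ℝ => -(z * gphi z * (1 + z ^ 2)⁻¹))
      Filter.atTop (nhds 0) := by
    have h2 : Filter.Tendsto (fun z : ℝ => (1 + z ^ 2)⁻¹) Filter.atTop (nhds 0) := by
      apply Filter.Tendsto.comp tendsto_inv_atTop_zero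
      exact Filter.tendsto_atTop_add_const_left _ 1
        (Filter.tendsto_pow_atTop (n := 2) (by norm_num) |>.comp Filter.tendsto_id)
    simpa using (tendsto_mul_gphi.mul h2).neg
  have := integral_Ioi_of_hasDerivAt_of_tendsto' hderiv hint htend
  rw [this]; ring

lemma PhiBar_pos (t : ℝ) : 0 < PhiBar t := by
  unfold PhiBar
  rw [setIntegral_pos_iff_support_of_nonneg_ae
    (Filter.Eventually.of_forall fun v => (gphi_pos v).le) integrable_gphi.restrict]
  have hs : Function.support gphi = Set.univ :=
    Set.eq_univ_of_forall fun v => (gphi_pos v).ne'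
  rw [hs, Set.univ_inter, Real.volume_Ioi]
  simp

/-- Mills-type inequality: `t φ(t) ≤ (1 + t²) Φ̄(t)`. -/
lemma mills (t : ℝ) : t * gphi t ≤ (1 + t ^ 2) * PhiBar t := by
  have h1 := integral_mills_core t
  have hint : IntegrableOn
      (fun z : ℝ => gphi z * ((z ^ 4 + 2 * z ^ 2 - 1) / (1 + z ^ 2) ^ 2)) (Set.Ioi t) := by
    apply Integrable.mono integrable_gphi.restrict
    · apply Continuous.aestronglyMeasurable
      exact continuous_gphi.mul ((by continuity : Continuous fun z : ℝ =>
        z ^ 4 + 2 * z ^ 2 - 1).div (by continuity) fun z => by positivity)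
    · refine Filter.Eventually.of_forall fun z => ?_
      have hg := gphi_pos z
      have hq : |(z ^ 4 + 2 * z ^ 2 - 1) / (1 + z ^ 2) ^ 2| ≤ 1 := by
        rw [abs_div, abs_of_nonneg (by positivity : (0:ℝ) ≤ (1 + z ^ 2) ^ 2),
          div_le_one (by positivity)]
        exact abs_le.mpr ⟨by nlinarith [sq_nonneg z], by nlinarith [sq_nonneg z]⟩
      rw [Real.norm_eq_abs, Real.norm_eq_abs, abs_mul, abs_of_nonneg hg.le]
      calc gphi z * |(z ^ 4 + 2 * z ^ 2 - 1) / (1 + z ^ 2) ^ 2| ≤ gphi z * 1 :=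
            mul_le_mul_of_nonneg_left hq hg.le
        _ = gphi z := mul_one _
  have h2 : (∫ z in Set.Ioi t, gphi z * ((z ^ 4 + 2 * z ^ 2 - 1) / (1 + z ^ 2) ^ 2))
      ≤ ∫ z in Set.Ioi t, gphi z := by
    apply setIntegral_mono_on hint integrable_gphi.restrict measurableSet_Ioi
    intro z _
    have hg := gphi_pos z
    have hq : (z ^ 4 + 2 * z ^ 2 - 1) / (1 + z ^ 2) ^ 2 ≤ 1 := by
      rw [div_le_one (by positivity)]
      nlinarith [sq_nonneg z]
    calc gphi z * ((z ^ 4 + 2 * z ^ 2 - 1) / (1 + z ^ 2) ^ 2) ≤ gphi z * 1 :=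
          mul_le_mul_of_nonneg_left hq hg.le
      _ = gphi z := mul_one _
  rw [h1] at h2
  have hpos : (0 : ℝ) < 1 + t ^ 2 := by positivity
  have : t * gphi t * (1 + t ^ 2)⁻¹ ≤ PhiBar t := h2
  calc t * gphi t = t * gphi t * (1 + t ^ 2)⁻¹ * (1 + t ^ 2) := by
        field_simp
    _ ≤ PhiBar t * (1 + t ^ 2) := mul_le_mul_of_nonneg_right this hpos.le
    _ = (1 + t ^ 2) * PhiBar t := mul_comm _ _

theorem stmt9 (r t : ℝ) (hr0 : 0 ≤ r) (hr2 : r ≤ 2) (ht : 0 < t) :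
    ∃ θ : ℝ, 0 ≤ θ ∧ θ ≤ r ∧
      2 * (∫ z in Set.Ioi t, z ^ r * gphi z) = 2 * t ^ r * PhiBar t * (1 + θ / t ^ 2) ∧
      2 * t ^ r * PhiBar t ≤ 2 * (∫ z in Set.Ioi t, z ^ r * gphi z) ∧
      2 * (∫ z in Set.Ioi t, z ^ r * gphi z) ≤ 2 * t ^ r * PhiBar t * (1 + r / t ^ 2) := by
  have htr : (0 : ℝ) < t ^ r := Real.rpow_pos_of_pos ht r
  have hPB := PhiBar_pos t
  set I : ℝ := ∫ z in Set.Ioi t, z ^ r * gphi z with hI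
  set B : ℝ := t ^ r * PhiBar t with hB
  have hBpos : 0 < B := mul_pos htr hPB
  have ht2 : (0 : ℝ) < t ^ 2 := by positivity
  -- lower bound
  have hlow : B ≤ I := by
    have : (∫ z in Set.Ioi t, t ^ r * gphi z) ≤ I := by
      apply setIntegral_mono_on (integrable_gphi.const_mul _).restrict
        (integrable_rpow_gphi hr0).restrict measurableSet_Ioi
      intro z hz
      exact mul_le_mul_of_nonneg_right
        (Real.rpow_le_rpow ht.le (le_of_lt hz) hr0) (gphi_pos z).le
    rwa [integral_const_mul] at this
  -- upper bound
  set c : ℝ := r / 2 * (t ^ r / t ^ 2) with hc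
  have hc0 : 0 ≤ c := by positivity
  have hup : I ≤ B * (1 + r / t ^ 2) := by
    -- pointwise bound via Bernoulli
    have hpt : ∀ z ∈ Set.Ioi t, z ^ r * gphi z ≤
        ((t ^ r - c * t ^ 2) + c * z ^ 2) * gphi z := by
      intro z hz
      have hzt : t < z := hz
      have hz0 : 0 < z := ht.trans hzt
      have hs : (0 : ℝ) ≤ z ^ 2 / t ^ 2 - 1 := by
        rw [le_sub_iff_add_le, zero_add, le_div_iff₀ ht2]
        nlinarith
      have hbern := rpow_one_add_le_one_add_mul_self (s := z ^ 2 / t ^ 2 - 1)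
        (by linarith) (p := r / 2) (by linarith) (by linarith)
      rw [add_sub_cancel] at hbern
      have hrw : (z ^ 2 / t ^ 2) ^ (r / 2 : ℝ) = z ^ r / t ^ r := by
        have he : ((2 : ℕ) : ℝ) * (r / 2) = r := by push_cast; ring
        rw [Real.div_rpow (by positivity) (by positivity),
          ← Real.rpow_natCast z 2, ← Real.rpow_natCast t 2,
          ← Real.rpow_mul hz0.le, ← Real.rpow_mul ht.le, he]
      rw [hrw] at hbern
      have hzr : z ^ r ≤ t ^ r * (1 + r / 2 * (z ^ 2 / t ^ 2 - 1)) := by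
        have := mul_le_mul_of_nonneg_left hbern htr.le
        rwa [mul_div_cancel₀ _ htr.ne'] at this
      have : z ^ r ≤ (t ^ r - c * t ^ 2) + c * z ^ 2 := by
        refine hzr.trans (le_of_eq ?_)
        rw [hc]; field_simp; ring
      exact mul_le_mul_of_nonneg_right this (gphi_pos z).le
    -- integrate
    have hintR : IntegrableOn (fun z : ℝ =>
        ((t ^ r - c * t ^ 2) + c * z ^ 2) * gphi z) (Set.Ioi t) := by
      have h := (integrable_gphi.const_mul (t ^ r - c * t ^ 2)).add
        ((integrable_sq_gphi).const_mul c)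
      exact (h.congr (Filter.Eventually.of_forall fun z => by
        simp only [Pi.add_apply]; ring)).restrict
    have h1 : I ≤ ∫ z in Set.Ioi t, ((t ^ r - c * t ^ 2) + c * z ^ 2) * gphi z :=
      setIntegral_mono_on (integrable_rpow_gphi hr0).restrict hintR
        measurableSet_Ioi hpt
    -- compute RHS integral
    have hsq : (∫ z in Set.Ioi t, z ^ 2 * gphi z) = t * gphi t + PhiBar t := by
      have h2 : (∫ z in Set.Ioi t, (z ^ 2 - 1) * gphi z)
          = (∫ z in Set.Ioi t, z ^ 2 * gphi z) - ∫ z in Set.Ioi t, gphi z := by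
        rw [← integral_sub integrable_sq_gphi.restrict integrable_gphi.restrict]
        exact integral_congr_ae (Filter.Eventually.of_forall fun z => by ring)
      have h3 := integral_sq_sub_one_gphi t
      rw [h2] at h3
      have : (∫ z in Set.Ioi t, gphi z) = PhiBar t := rfl
      rw [this] at h3
      linarith
    have hRHS : (∫ z in Set.Ioi t, ((t ^ r - c * t ^ 2) + c * z ^ 2) * gphi z)
        = (t ^ r - c * t ^ 2) * PhiBar t + c * (t * gphi t + PhiBar t) := by
      have : (∫ z in Set.Ioi t, ((t ^ r - c * t ^ 2) + c * z ^ 2) * gphi z)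
          = (∫ z in Set.Ioi t, (t ^ r - c * t ^ 2) * gphi z)
            + ∫ z in Set.Ioi t, c * (z ^ 2 * gphi z) := by
        rw [← integral_add (integrable_gphi.const_mul _).restrict
          ((integrable_sq_gphi.const_mul c).congr (Filter.Eventually.of_forall
            fun z => by ring)).restrict]
        exact integral_congr_ae (Filter.Eventually.of_forall fun z => by ring)
      rw [this, integral_const_mul, integral_const_mul, hsq]
      rfl
    rw [hRHS] at h1
    have hm := mills t
    have : (t ^ r - c * t ^ 2) * PhiBar t + c * (t * gphi t + PhiBar t)
        ≤ B * (1 + r / t ^ 2) := by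
      have step : c * (t * gphi t) ≤ c * ((1 + t ^ 2) * PhiBar t) :=
        mul_le_mul_of_nonneg_left hm hc0
      have hBexp : B * (1 + r / t ^ 2)
          = (t ^ r - c * t ^ 2) * PhiBar t + c * ((1 + t ^ 2) * PhiBar t + PhiBar t) := by
        rw [hB, hc]; field_simp; ring
      rw [hBexp]
      nlinarith
    linarith
  -- assemble
  refine ⟨(I / B - 1) * t ^ 2, ?_, ?_, ?_, ?_, ?_⟩
  · have : 1 ≤ I / B := (one_le_div hBpos).mpr hlow
    nlinarith
  · have : I / B ≤ 1 + r / t ^ 2 := (div_le_iff₀ hBpos).mpr (by linarith [hup])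
    have h4 : I / B - 1 ≤ r / t ^ 2 := by linarith
    calc (I / B - 1) * t ^ 2 ≤ r / t ^ 2 * t ^ 2 :=
          mul_le_mul_of_nonneg_right h4 ht2.le
      _ = r := by field_simp
  · have hBne : B ≠ 0 := hBpos.ne'
    clear_value I B
    have h5 : (I / B - 1) * t ^ 2 / t ^ 2 = I / B - 1 := by
      rw [mul_div_assoc, div_self ht2.ne', mul_one]
    rw [show (2 : ℝ) * t ^ r * PhiBar t = 2 * B by rw [hB]; ring, h5]
    field_simp
    ring
  · linarith
  · calc 2 * I ≤ 2 * (B * (1 + r / t ^ 2)) := by linarith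
      _ = 2 * t ^ r * PhiBar t * (1 + r / t ^ 2) := by rw [hB]; ring
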